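/- Let Q be a nondegenerate quadratic form on ℂ³ with polar bilinear form B (so B(u,v) = Q(u+v) − Q(u) − Q(v)), and let C = {x ∈ P²(ℂ) : Q(x̂) = 0} be the associated smooth conic (where x̂ denotes any representative of x; the condition is independent of the representative). Then: (1) for every point p ∈ P²(ℂ) with Q(p̂) ≠ 0, the set {x ∈ C : B(p̂, x̂) = 0} has exactly two elements; and (2) the map sending such p to this two-element subset of C is a bijection from {p ∈ P²(ℂ) : Q(p̂) ≠ 0} onto the set of two-element subsets of C. -/

import Mathlib

open scoped LinearAlgebra.Projectivization
open QuadraticMap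

noncomputable section

/-- The complex projective plane `P²(ℂ)`, as the projectivization of `ℂ³`. -/
abbrev P2 : Type := ℙ ℂ (Fin 3 → ℂ)

namespace PolarConicAux

abbrev F3 : Type := Fin 3 → ℂ

lemma li2 {v₀ v₁ : F3}
    (h : ∀ g₀ g₁ : ℂ, g₀ • v₀ + g₁ • v₁ = 0 → g₀ = 0 ∧ g₁ = 0) :
    LinearIndependent ℂ ![v₀, v₁] := by
  rw [Fintype.linearIndependent_iff]
  intro g hg
  rw [Fin.sum_univ_two] at hg
  simp only [Matrix.cons_val_zero, Matrix.cons_val_one, Matrix.head_cons] at hg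
  obtain ⟨h₀, h₁⟩ := h _ _ hg
  intro i; fin_cases i <;> assumption

lemma li3 {v₀ v₁ v₂ : F3}
    (h : ∀ g₀ g₁ g₂ : ℂ, g₀ • v₀ + g₁ • v₁ + g₂ • v₂ = 0 → g₀ = 0 ∧ g₁ = 0 ∧ g₂ = 0) :
    LinearIndependent ℂ ![v₀, v₁, v₂] := by
  rw [Fintype.linearIndependent_iff]
  intro g hg
  rw [Fin.sum_univ_three] at hg
  simp only [Matrix.cons_val_zero, Matrix.cons_val_one, Matrix.head_cons,
    Matrix.cons_val_two, Matrix.tail_cons] at hg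
  obtain ⟨h₀, h₁, h₂⟩ := h _ _ _ hg
  intro i; fin_cases i <;> assumption

lemma coeffs2 {v₀ v₁ : F3} (li : LinearIndependent ℂ ![v₀, v₁]) {s t : ℂ}
    (h : s • v₀ + t • v₁ = 0) : s = 0 ∧ t = 0 := by
  have := Fintype.linearIndependent_iff.mp li ![s, t] (by
    rw [Fin.sum_univ_two]
    simpa using h)
  exact ⟨this 0, this 1⟩

lemma exists_coords {v₀ v₁ v₂ : F3} (li : LinearIndependent ℂ ![v₀, v₁, v₂]) (v : F3) :
    ∃ c₀ c₁ c₂ : ℂ, v = c₀ • v₀ + c₁ • v₁ + c₂ • v₂ := by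
  have hcard : Fintype.card (Fin 3) = Module.finrank ℂ F3 := by simp
  let b := basisOfLinearIndependentOfCardEqFinrank li hcard
  have hb : ⇑b = ![v₀, v₁, v₂] := coe_basisOfLinearIndependentOfCardEqFinrank li hcard
  refine ⟨b.repr v 0, b.repr v 1, b.repr v 2, ?_⟩
  have h := b.sum_repr v
  rw [Fin.sum_univ_three, hb] at h
  simpa using h.symm

variable (Q : QuadraticForm ℂ F3)

lemma Qadd (x y : F3) : Q (x + y) = Q x + Q y + polar Q x y := by
  simp [polar]

lemma polar_self_zero {x : F3} (h : Q x = 0) : polar Q x x = 0 := by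
  rw [polar_self, h, smul_zero]

/-- If `w` is polar-orthogonal to three linearly independent vectors, it is orthogonal to
everything, hence zero by nondegeneracy. -/
lemma eq_zero_of_perp (hQ : ∀ u : F3, (∀ v : F3, polar Q u v = 0) → u = 0)
    {v₀ v₁ v₂ : F3} (li : LinearIndependent ℂ ![v₀, v₁, v₂]) {w : F3}
    (h₀ : polar Q w v₀ = 0) (h₁ : polar Q w v₁ = 0) (h₂ : polar Q w v₂ = 0) : w = 0 := by
  apply hQ
  intro v
  obtain ⟨c₀, c₁, c₂, rfl⟩ := exists_coords li v
  rw [polar_add_right, polar_add_right, polar_smul_right, polar_smul_right, polar_smul_right,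
    h₀, h₁, h₂]
  simp

/-- Existence of a nonzero isotropic vector in the polar hyperplane of `P`. -/
lemma exists_isotropic (P : F3) (hP : Q P ≠ 0) :
    ∃ a : F3, a ≠ 0 ∧ Q a = 0 ∧ polar Q P a = 0 := by
  set φ : F3 →ₗ[ℂ] ℂ := polarBilin Q P with hφdef
  have hφP : φ P = 2 * Q P := by
    simp [hφdef, polar_self, two_smul, two_mul]
  have hrange : LinearMap.range φ = ⊤ := by
    rw [LinearMap.range_eq_top]
    intro c
    refine ⟨(c / (2 * Q P)) • P, ?_⟩
    rw [_root_.map_smul, hφP]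
    rw [smul_eq_mul]
    exact div_mul_cancel₀ c (mul_ne_zero two_ne_zero hP)
  have hker : Module.finrank ℂ (LinearMap.ker φ) = 2 := by
    have h1 : Module.finrank ℂ (LinearMap.range φ) = 1 := by
      rw [hrange, finrank_top, Module.finrank_self]
    have h2 := LinearMap.finrank_range_add_finrank_ker φ
    have h3 : Module.finrank ℂ F3 = 3 := by simp
    omega
  obtain ⟨b⟩ : Nonempty (Module.Basis (Fin 2) ℂ (LinearMap.ker φ)) :=
    ⟨Module.finBasisOfFinrankEq ℂ _ hker⟩
  obtain ⟨e, he, hemem⟩ : ∃ e : F3, e = ↑(b 0) ∧ e ∈ LinearMap.ker φ :=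
    ⟨↑(b 0), rfl, (b 0).2⟩
  obtain ⟨f, hf, hfmem⟩ : ∃ f : F3, f = ↑(b 1) ∧ f ∈ LinearMap.ker φ :=
    ⟨↑(b 1), rfl, (b 1).2⟩
  have heker : polar Q P e = 0 := by
    have h : φ e = 0 := hemem
    rw [hφdef] at h
    simpa using h
  have hfker : polar Q P f = 0 := by
    have h : φ f = 0 := hfmem
    rw [hφdef] at h
    simpa using h
  have hene : e ≠ 0 := by
    intro h
    exact b.ne_zero 0 (Submodule.coe_eq_zero.mp (by rw [← he]; exact h))
  by_cases hQe : Q e = 0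
  · exact ⟨e, hene, hQe, heker⟩
  · -- solve the quadratic `Q e * t² + polar Q e f * t + Q f = 0`
    obtain ⟨t, ht⟩ : ∃ t : ℂ, Q e * t ^ 2 + polar Q e f * t + Q f = 0 := by
      obtain ⟨t, ht⟩ := Complex.exists_root (f := Polynomial.C (Q e) * Polynomial.X ^ 2 +
          Polynomial.C (polar Q e f) * Polynomial.X + Polynomial.C (Q f)) (by
        rw [Polynomial.degree_quadratic hQe]; norm_num)
      refine ⟨t, ?_⟩
      simpa [Polynomial.IsRoot] using ht
    refine ⟨t • e + f, ?_, ?_, ?_⟩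
    · intro h
      have hsub : t • (b 0) + (b 1) = (0 : LinearMap.ker φ) := by
        apply Submodule.coe_eq_zero.mp
        rw [Submodule.coe_add, Submodule.coe_smul, ← he, ← hf]
        exact h
      have := Fintype.linearIndependent_iff.mp b.linearIndependent ![t, 1] (by
        rw [Fin.sum_univ_two]
        simp only [Matrix.cons_val_zero, Matrix.cons_val_one, Matrix.head_cons, one_smul]
        exact hsub)
      simpa using this 1
    · rw [Qadd, QuadraticMap.map_smul, polar_smul_left]
      simp only [smul_eq_mul]
      linear_combination ht
    · rw [polar_add_right, polar_smul_right, heker, hfker]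
      simp

/-- Existence of a companion vector `b` in the polar hyperplane with `polar Q a b ≠ 0`. -/
lemma exists_companion' (hQ : ∀ u : F3, (∀ v : F3, polar Q u v = 0) → u = 0)
    (P a : F3) (hP : Q P ≠ 0) (ha : a ≠ 0) (hPa : polar Q P a = 0) :
    ∃ c : F3, polar Q P c = 0 ∧ polar Q a c ≠ 0 := by
  by_contra h
  push_neg at h
  apply ha
  apply hQ
  intro v
  have hPP : polar Q P P = 2 * Q P := by rw [polar_self, two_smul, two_mul]
  have hPPne : polar Q P P ≠ 0 := by
    rw [hPP]; exact mul_ne_zero two_ne_zero hP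
  have hker : polar Q P (v - (polar Q P v / polar Q P P) • P) = 0 := by
    rw [polar_sub_right, polar_smul_right, smul_eq_mul]
    field_simp
    ring
  have h2 := h _ hker
  rw [polar_sub_right, polar_smul_right] at h2
  have haP : polar Q a P = 0 := by rw [polar_comm]; exact hPa
  rw [haP] at h2
  simpa using h2

/-- The key structural lemma: the polar line of an exterior point meets the conic in exactly
the two points `mk a` and `mk c`, with good properties. -/
lemma key (hQ : ∀ u : F3, (∀ v : F3, polar Q u v = 0) → u = 0)
    (p : P2) (hp : Q p.rep ≠ 0) :
    ∃ (a c : F3) (ha : a ≠ 0) (hc : c ≠ 0),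
      Q a = 0 ∧ Q c = 0 ∧ polar Q p.rep a = 0 ∧ polar Q p.rep c = 0 ∧ polar Q a c ≠ 0 ∧
      Projectivization.mk ℂ a ha ≠ Projectivization.mk ℂ c hc ∧
      {x : P2 | Q x.rep = 0 ∧ polar Q p.rep x.rep = 0} =
        {Projectivization.mk ℂ a ha, Projectivization.mk ℂ c hc} := by
  set P := p.rep with hPdef
  obtain ⟨a, ha, haQ, hPa⟩ := exists_isotropic Q P hp
  obtain ⟨b, hPb, hab⟩ := exists_companion' Q hQ P a hp ha hPa
  have haa : polar Q a a = 0 := polar_self_zero Q haQ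
  -- the second intersection point
  set c : F3 := (-(Q b)) • a + (polar Q a b) • b with hcdef
  have liab : LinearIndependent ℂ ![a, b] := by
    apply li2
    intro s t hst
    have h1 : polar Q a (s • a + t • b) = 0 := by rw [hst, polar_zero_right]
    rw [polar_add_right, polar_smul_right, polar_smul_right, haa] at h1
    have ht : t = 0 := by
      rcases (by simpa using h1 : t = 0 ∨ polar Q a b = 0) with h | h
      · exact h
      · exact absurd h hab
    subst ht
    refine ⟨?_, rfl⟩
    have : s • a = 0 := by simpa using hst
    rcases smul_eq_zero.mp this with h | h
    · exact h
    · exact absurd h ha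
  have hQc : Q c = 0 := by
    rw [hcdef, Qadd, QuadraticMap.map_smul, QuadraticMap.map_smul, polar_smul_left, polar_smul_right, haQ]
    simp only [smul_eq_mul]
    ring
  have hPc : polar Q P c = 0 := by
    rw [hcdef, polar_add_right, polar_smul_right, polar_smul_right, hPa, hPb]
    simp
  have hac : polar Q a c = polar Q a b * polar Q a b := by
    rw [hcdef, polar_add_right, polar_smul_right, polar_smul_right, haa]
    simp [smul_eq_mul]
  have hacne : polar Q a c ≠ 0 := by
    rw [hac]; exact mul_ne_zero hab hab
  have hc : c ≠ 0 := by
    intro h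
    obtain ⟨-, h2⟩ := coeffs2 liab (h ▸ rfl : (-(Q b)) • a + (polar Q a b) • b = 0)
    exact hab h2
  have hmkne : Projectivization.mk ℂ a ha ≠ Projectivization.mk ℂ c hc := by
    intro h
    obtain ⟨u, hu⟩ := (Projectivization.mk_eq_mk_iff ℂ a c ha hc).mp h
    -- u • c = a
    have : ((u : ℂ) * (-(Q b)) - 1) • a + ((u : ℂ) * polar Q a b) • b = 0 := by
      have : (u : ℂ) • c - a = 0 := by rw [Units.smul_def] at hu; rw [hu]; simp
      rw [hcdef] at this
      rw [sub_smul, mul_smul, mul_smul]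
      rw [smul_add] at this
      linear_combination (norm := module) this
    obtain ⟨-, h2⟩ := coeffs2 liab this
    rcases mul_eq_zero.mp h2 with h' | h'
    · exact u.ne_zero h'
    · exact hab h'
  refine ⟨a, c, ha, hc, haQ, hQc, hPa, hPc, hacne, hmkne, ?_⟩
  have hPP : polar Q P P = 2 * Q P := by rw [polar_self, two_smul, two_mul]
  have hPPne : polar Q P P ≠ 0 := by rw [hPP]; exact mul_ne_zero two_ne_zero hp
  ext x
  simp only [Set.mem_setOf_eq, Set.mem_insert_iff, Set.mem_singleton_iff]
  constructor
  · rintro ⟨hxQ, hxP⟩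
    have liPab : LinearIndependent ℂ ![P, a, b] := by
      apply li3
      intro g₀ g₁ g₂ hg
      have h1 : polar Q P (g₀ • P + g₁ • a + g₂ • b) = 0 := by rw [hg, polar_zero_right]
      rw [polar_add_right, polar_add_right, polar_smul_right, polar_smul_right,
        polar_smul_right, hPa, hPb] at h1
      have hg₀ : g₀ = 0 := by
        rcases (by simpa using h1 : g₀ = 0 ∨ Q P = 0) with h | h
        · exact h
        · exact absurd h hp
      subst hg₀
      obtain ⟨h1', h2'⟩ := coeffs2 liab (by simpa using hg)
      exact ⟨rfl, h1', h2'⟩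
    obtain ⟨c₀, c₁, c₂, hv⟩ := exists_coords liPab x.rep
    have hc₀ : c₀ = 0 := by
      have h1 : polar Q P x.rep = c₀ * polar Q P P := by
        rw [hv, polar_add_right, polar_add_right, polar_smul_right, polar_smul_right,
          polar_smul_right, hPa, hPb]
        simp
      rw [hxP] at h1
      rcases mul_eq_zero.mp h1.symm with h | h
      · exact h
      · exact absurd h hPPne
    subst hc₀
    rw [zero_smul, zero_add] at hv
    have hQx : c₂ * (c₁ * polar Q a b + c₂ * Q b) = 0 := by
      have : Q x.rep = c₂ * (c₁ * polar Q a b + c₂ * Q b) := by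
        rw [hv, Qadd, QuadraticMap.map_smul, QuadraticMap.map_smul, polar_smul_left, polar_smul_right, haQ]
        simp only [smul_eq_mul]
        ring
      rw [← this, hxQ]
    by_cases hc₂ : c₂ = 0
    · left
      subst hc₂
      rw [zero_smul, add_zero] at hv
      have hc₁ : c₁ ≠ 0 := by
        intro h; apply x.rep_nonzero; rw [hv, h, zero_smul]
      rw [← Projectivization.mk_rep x]
      exact (Projectivization.mk_eq_mk_iff' ℂ x.rep a x.rep_nonzero ha).mpr ⟨c₁, hv.symm⟩
    · right
      have hrel : c₁ * polar Q a b + c₂ * Q b = 0 := by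
        rcases mul_eq_zero.mp hQx with h | h
        · exact absurd h hc₂
        · exact h
      rw [← Projectivization.mk_rep x]
      refine (Projectivization.mk_eq_mk_iff' ℂ x.rep c x.rep_nonzero hc).mpr
        ⟨c₂ / polar Q a b, ?_⟩
      rw [hcdef, smul_add, smul_smul, smul_smul, hv]
      congr 1
      · congr 1
        field_simp
        linear_combination -hrel
      · congr 1
        field_simp
  · have repmem : ∀ (v : F3) (hv : v ≠ 0), Q v = 0 → polar Q P v = 0 →
        Q (Projectivization.mk ℂ v hv).rep = 0 ∧
          polar Q P (Projectivization.mk ℂ v hv).rep = 0 := by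
      intro v hv h1 h2
      obtain ⟨u, hu⟩ := Projectivization.exists_smul_eq_mk_rep ℂ v hv
      rw [← hu, Units.smul_def, QuadraticMap.map_smul, polar_smul_right, h1, h2]
      simp
    rintro (rfl | rfl)
    · exact repmem a ha haQ hPa
    · exact repmem c hc hQc hPc

end PolarConicAux

open PolarConicAux

/-- Let `Q` be a nondegenerate quadratic form on `ℂ³`, with polar form
`B(u,v) = Q(u+v) − Q(u) − Q(v)`, and let `C ⊆ P²(ℂ)` be the smooth conic `Q = 0`. Then for
every point `p` with `Q(p̂) ≠ 0`, the polar line of `p` meets `C` in exactly two points, and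
`p ↦ (polar line of p) ∩ C` is a bijection from the complement of `C` onto the set of
two-element subsets of `C`. -/
theorem polar_bijection_complement_conic_two_subsets
    (Q : QuadraticForm ℂ (Fin 3 → ℂ))
    (hQ : ∀ u : Fin 3 → ℂ, (∀ v : Fin 3 → ℂ, polar Q u v = 0) → u = 0) :
    (∀ p : P2, Q p.rep ≠ 0 →
      Set.ncard {x : P2 | Q x.rep = 0 ∧ polar Q p.rep x.rep = 0} = 2) ∧
    Set.BijOn (fun p : P2 => {x : P2 | Q x.rep = 0 ∧ polar Q p.rep x.rep = 0})
      {p : P2 | Q p.rep ≠ 0}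
      {s : Set P2 | s ⊆ {x : P2 | Q x.rep = 0} ∧ s.ncard = 2} := by
  have part1 : ∀ p : P2, Q p.rep ≠ 0 →
      Set.ncard {x : P2 | Q x.rep = 0 ∧ polar Q p.rep x.rep = 0} = 2 := by
    intro p hp
    obtain ⟨a, c, ha, hc, -, -, -, -, -, hne, hset⟩ := key Q hQ p hp
    rw [hset]
    exact Set.ncard_pair hne
  refine ⟨part1, ?_, ?_, ?_⟩
  · -- MapsTo
    intro p hp
    exact ⟨fun x hx => hx.1, part1 p hp⟩
  · -- InjOn
    intro p hp q hq h
    simp only at h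
    obtain ⟨a, c, ha, hc, hQa, hQc, hpa, hpc, hac, hne, hset⟩ := key Q hQ p hp
    have haa : polar Q a a = 0 := polar_self_zero Q hQa
    have hcc : polar Q c c = 0 := polar_self_zero Q hQc
    have hqa : polar Q q.rep a = 0 := by
      have hmem : Projectivization.mk ℂ a ha ∈
          {x : P2 | Q x.rep = 0 ∧ polar Q q.rep x.rep = 0} := by
        rw [← h, hset]; left; rfl
      obtain ⟨u, hu⟩ := Projectivization.exists_smul_eq_mk_rep ℂ a ha
      have := hmem.2
      rw [← hu, Units.smul_def, polar_smul_right] at this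
      simpa using this
    have hqc : polar Q q.rep c = 0 := by
      have hmem : Projectivization.mk ℂ c hc ∈
          {x : P2 | Q x.rep = 0 ∧ polar Q q.rep x.rep = 0} := by
        rw [← h, hset]; right; rfl
      obtain ⟨u, hu⟩ := Projectivization.exists_smul_eq_mk_rep ℂ c hc
      have := hmem.2
      rw [← hu, Units.smul_def, polar_smul_right] at this
      simpa using this
    have hPP : polar Q p.rep p.rep = 2 * Q p.rep := by rw [polar_self, two_smul, two_mul]
    have hPPne : polar Q p.rep p.rep ≠ 0 := by rw [hPP]; exact mul_ne_zero two_ne_zero hp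
    have liac : LinearIndependent ℂ ![a, c] := by
      apply li2
      intro s t hst
      have h1 : polar Q a (s • a + t • c) = 0 := by rw [hst, polar_zero_right]
      rw [polar_add_right, polar_smul_right, polar_smul_right, haa] at h1
      have ht : t = 0 := by
        rcases (by simpa using h1 : t = 0 ∨ polar Q a c = 0) with h' | h'
        · exact h'
        · exact absurd h' hac
      subst ht
      refine ⟨?_, rfl⟩
      have : s • a = 0 := by simpa using hst
      rcases smul_eq_zero.mp this with h' | h'
      · exact h'
      · exact absurd h' ha
    have li : LinearIndependent ℂ ![p.rep, a, c] := by
      apply li3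
      intro g₀ g₁ g₂ hg
      have h1 : polar Q p.rep (g₀ • p.rep + g₁ • a + g₂ • c) = 0 := by
        rw [hg, polar_zero_right]
      rw [polar_add_right, polar_add_right, polar_smul_right, polar_smul_right,
        polar_smul_right, hpa, hpc] at h1
      have hg₀ : g₀ = 0 := by
        rcases (by simpa using h1 : g₀ = 0 ∨ Q p.rep = 0) with h' | h'
        · exact h'
        · exact absurd h' hp
      subst hg₀
      obtain ⟨h1', h2'⟩ := coeffs2 liac (by simpa using hg)
      exact ⟨rfl, h1', h2'⟩
    obtain ⟨d₀, d₁, d₂, hv⟩ := exists_coords li q.rep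
    have hap : polar Q a p.rep = 0 := by rw [polar_comm]; exact hpa
    have hcp : polar Q c p.rep = 0 := by rw [polar_comm]; exact hpc
    have haq : polar Q a q.rep = 0 := by rw [polar_comm]; exact hqa
    have hcq : polar Q c q.rep = 0 := by rw [polar_comm]; exact hqc
    have hd₂ : d₂ = 0 := by
      have h1 : polar Q a q.rep = d₂ * polar Q a c := by
        rw [hv, polar_add_right, polar_add_right, polar_smul_right, polar_smul_right,
          polar_smul_right, hap, haa]
        simp
      rw [haq] at h1
      rcases mul_eq_zero.mp h1.symm with h' | h'
      · exact h'
      · exact absurd h' hac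
    have hca : polar Q c a = polar Q a c := polar_comm _ _ _
    have hd₁ : d₁ = 0 := by
      have h1 : polar Q c q.rep = d₁ * polar Q a c := by
        rw [hv, polar_add_right, polar_add_right, polar_smul_right, polar_smul_right,
          polar_smul_right, hcp, hcc, hca]
        simp
      rw [hcq] at h1
      rcases mul_eq_zero.mp h1.symm with h' | h'
      · exact h'
      · exact absurd h' hac
    subst hd₂; subst hd₁
    rw [zero_smul, zero_smul, add_zero, add_zero] at hv
    rw [← Projectivization.mk_rep q, ← Projectivization.mk_rep p]
    exact ((Projectivization.mk_eq_mk_iff' ℂ q.rep p.rep q.rep_nonzero p.rep_nonzero).mpr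
      ⟨d₀, hv.symm⟩).symm
  · -- SurjOn
    rintro s ⟨hsub, hcard⟩
    obtain ⟨x, y, hxy, rfl⟩ := Set.ncard_eq_two.mp hcard
    set A := x.rep with hA
    set Bv := y.rep with hB
    have hQA : Q A = 0 := hsub (by left; rfl)
    have hQB : Q Bv = 0 := hsub (by right; rfl)
    have hAA : polar Q A A = 0 := polar_self_zero Q hQA
    have hBB : polar Q Bv Bv = 0 := polar_self_zero Q hQB
    have liAB : LinearIndependent ℂ ![A, Bv] := by
      apply li2
      intro s t hst
      by_cases hs : s = 0
      · subst hs
        rw [zero_smul, zero_add] at hst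
        rcases smul_eq_zero.mp hst with h' | h'
        · exact ⟨rfl, h'⟩
        · exact absurd h' y.rep_nonzero
      · exfalso
        apply hxy
        have h2 : s • A = (-t) • Bv := by
          linear_combination (norm := module) hst
        have hAeq : A = (s⁻¹ * (-t)) • Bv := by
          rw [mul_smul, ← h2, inv_smul_smul₀ hs]
        rw [← Projectivization.mk_rep x, ← Projectivization.mk_rep y]
        exact (Projectivization.mk_eq_mk_iff' ℂ x.rep y.rep x.rep_nonzero
          y.rep_nonzero).mpr ⟨s⁻¹ * (-t), hAeq.symm⟩
    obtain ⟨z, hz⟩ : ∃ z, polar Q A z ≠ 0 := by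
      by_contra h
      push_neg at h
      exact x.rep_nonzero (hQ A h)
    have hAB : polar Q A Bv ≠ 0 := by
      intro h0
      have hBA : polar Q Bv A = 0 := by rw [polar_comm]; exact h0
      have li : LinearIndependent ℂ ![A, Bv, z] := by
        apply li3
        intro g₀ g₁ g₂ hg
        have h1 : polar Q A (g₀ • A + g₁ • Bv + g₂ • z) = 0 := by rw [hg, polar_zero_right]
        rw [polar_add_right, polar_add_right, polar_smul_right, polar_smul_right,
          polar_smul_right, hAA, h0] at h1
        have hg₂ : g₂ = 0 := by
          rcases (by simpa using h1 : g₂ = 0 ∨ polar Q A z = 0) with h' | h'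
          · exact h'
          · exact absurd h' hz
        subst hg₂
        obtain ⟨h1', h2'⟩ := coeffs2 liAB (by simpa using hg)
        exact ⟨h1', h2', rfl⟩
      set w : F3 := polar Q Bv z • A - polar Q A z • Bv with hw
      have hwzero : w = 0 := by
        apply eq_zero_of_perp Q hQ li
        · rw [hw, polar_sub_left, polar_smul_left, polar_smul_left, hAA, hBA]
          simp
        · rw [hw, polar_sub_left, polar_smul_left, polar_smul_left, h0, hBB]
          simp
        · rw [hw, polar_sub_left, polar_smul_left, polar_smul_left,
            polar_comm Q A z, polar_comm Q Bv z]
          simp only [smul_eq_mul]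
          ring
      have : polar Q Bv z • A + (-(polar Q A z)) • Bv = 0 := by
        rw [neg_smul, ← sub_eq_add_neg]; exact hwzero
      obtain ⟨-, h2⟩ := coeffs2 liAB this
      exact hz (by simpa using h2)
    -- find z' outside the span of A, Bv
    obtain ⟨z', hz'⟩ : ∃ z', z' ∉ Submodule.span ℂ ({A, Bv} : Set F3) := by
      by_contra h
      push_neg at h
      have htop : Submodule.span ℂ ({A, Bv} : Set F3) = ⊤ := by
        rw [Submodule.eq_top_iff']; exact h
      classical
      have hle : Module.finrank ℂ (Submodule.span ℂ ({A, Bv} : Set F3)) ≤ 2 := by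
        have h1 := finrank_span_finset_le_card (R := ℂ) ({A, Bv} : Finset F3)
        have hcoe : ((({A, Bv} : Finset F3) : Set F3)) = ({A, Bv} : Set F3) := by simp
        have h2 : ({A, Bv} : Finset F3).card ≤ 2 := by
          apply (Finset.card_insert_le _ _).trans
          simp
        rw [hcoe] at h1
        exact h1.trans h2
      rw [htop] at hle
      have h3 : Module.finrank ℂ F3 = 3 := by simp
      rw [finrank_top, h3] at hle
      omega
    set p₀ : F3 := z' - (polar Q Bv z' / polar Q A Bv) • A -
      (polar Q A z' / polar Q A Bv) • Bv with hp₀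
    have hBA : polar Q Bv A = polar Q A Bv := polar_comm _ _ _
    have hAp₀ : polar Q A p₀ = 0 := by
      rw [hp₀, polar_sub_right, polar_sub_right, polar_smul_right, polar_smul_right, hAA]
      simp only [smul_eq_mul]
      field_simp
      ring
    have hBp₀ : polar Q Bv p₀ = 0 := by
      rw [hp₀, polar_sub_right, polar_sub_right, polar_smul_right, polar_smul_right, hBB, hBA]
      simp only [smul_eq_mul]
      field_simp
      ring
    have hp₀ne : p₀ ≠ 0 := by
      intro h
      apply hz'
      rw [Submodule.mem_span_pair]
      refine ⟨polar Q Bv z' / polar Q A Bv, polar Q A z' / polar Q A Bv, ?_⟩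
      have := sub_eq_zero.mp (by rw [← sub_sub]; exact h :
        z' - ((polar Q Bv z' / polar Q A Bv) • A + (polar Q A z' / polar Q A Bv) • Bv) = 0)
      exact this.symm
    have hQp₀ : Q p₀ ≠ 0 := by
      intro h0
      have hp₀p₀ : polar Q p₀ p₀ = 0 := polar_self_zero Q h0
      have hp₀A : polar Q p₀ A = 0 := by rw [polar_comm]; exact hAp₀
      have hp₀B : polar Q p₀ Bv = 0 := by rw [polar_comm]; exact hBp₀
      have li : LinearIndependent ℂ ![A, Bv, p₀] := by
        apply li3
        intro g₀ g₁ g₂ hg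
        have h1 : polar Q A (g₀ • A + g₁ • Bv + g₂ • p₀) = 0 := by rw [hg, polar_zero_right]
        have h2 : polar Q Bv (g₀ • A + g₁ • Bv + g₂ • p₀) = 0 := by rw [hg, polar_zero_right]
        rw [polar_add_right, polar_add_right, polar_smul_right, polar_smul_right,
          polar_smul_right, hAA, hAp₀] at h1
        rw [polar_add_right, polar_add_right, polar_smul_right, polar_smul_right,
          polar_smul_right, hBB, hBA, hBp₀] at h2
        have hg₁ : g₁ = 0 := by
          rcases (by simpa using h1 : g₁ = 0 ∨ polar Q A Bv = 0) with h' | h'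
          · exact h'
          · exact absurd h' hAB
        have hg₀ : g₀ = 0 := by
          rcases (by simpa using h2 : g₀ = 0 ∨ polar Q A Bv = 0) with h' | h'
          · exact h'
          · exact absurd h' hAB
        subst hg₁
        subst hg₀
        refine ⟨rfl, rfl, ?_⟩
        have : g₂ • p₀ = 0 := by simpa using hg
        rcases smul_eq_zero.mp this with h' | h'
        · exact h'
        · exact absurd h' hp₀ne
      exact hp₀ne (eq_zero_of_perp Q hQ li hp₀A hp₀B hp₀p₀)
    refine ⟨Projectivization.mk ℂ p₀ hp₀ne, ?_, ?_⟩
    · -- mk p₀ is in the source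
      show Q (Projectivization.mk ℂ p₀ hp₀ne).rep ≠ 0
      obtain ⟨u, hu⟩ := Projectivization.exists_smul_eq_mk_rep ℂ p₀ hp₀ne
      rw [← hu, Units.smul_def, QuadraticMap.map_smul]
      simp only [smul_eq_mul]
      exact mul_ne_zero (mul_ne_zero u.ne_zero u.ne_zero) hQp₀
    · -- the image is {x, y}
      simp only
      set p : P2 := Projectivization.mk ℂ p₀ hp₀ne with hpdef
      have hpQ : Q p.rep ≠ 0 := by
        obtain ⟨u, hu⟩ := Projectivization.exists_smul_eq_mk_rep ℂ p₀ hp₀ne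
        rw [hpdef, ← hu, Units.smul_def, QuadraticMap.map_smul]
        simp only [smul_eq_mul]
        exact mul_ne_zero (mul_ne_zero u.ne_zero u.ne_zero) hQp₀
      obtain ⟨u, hu⟩ := Projectivization.exists_smul_eq_mk_rep ℂ p₀ hp₀ne
      have hrep : p.rep = (u : ℂ) • p₀ := by rw [hpdef, ← hu, Units.smul_def]
      have hpolar : ∀ v : F3, polar Q p₀ v = 0 → polar Q p.rep v = 0 := by
        intro v hv
        rw [hrep, polar_smul_left, hv, smul_zero]
      have hsubset : ({x, y} : Set P2) ⊆
          {z : P2 | Q z.rep = 0 ∧ polar Q p.rep z.rep = 0} := by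
        rintro w (rfl | rfl)
        · exact ⟨hQA, hpolar A (by rw [polar_comm]; exact hAp₀)⟩
        · exact ⟨hQB, hpolar Bv (by rw [polar_comm]; exact hBp₀)⟩
      obtain ⟨a, c, ha, hc, -, -, -, -, -, hne, hset⟩ := key Q hQ p hpQ
      have hfin : {z : P2 | Q z.rep = 0 ∧ polar Q p.rep z.rep = 0}.Finite := by
        rw [hset]; exact (Set.finite_singleton _).insert _
      have hn : {z : P2 | Q z.rep = 0 ∧ polar Q p.rep z.rep = 0}.ncard = 2 := by
        rw [hset]; exact Set.ncard_pair hne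
      have := Set.eq_of_subset_of_ncard_le hsubset
        (by rw [hn, Set.ncard_pair hxy]) hfin
      exact this.symm

end
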